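/- Let Σ be a type, M and N monoids, and Φ : Σ* → ◊(M,N) a monoid homomorphism from the free monoid on Σ; write Φ(w) = (ζ(w), φ₁(w), φ₂(w)). Then for every word w ∈ Σ*, ζ(w) = ⋃ {φ₁(u)·ζ(a)·φ₂(v) : u, v ∈ Σ*, a ∈ Σ, w = u·a·v}, where φ₁(u)·T·φ₂(v) denotes the finite set {(φ₁(u)·m, n·φ₂(v)) : (m,n) ∈ T}. -/
import Mathlib


/-- The multiplication of the binary Schützenberger product `◊(M,N)` on
`Finset (M × N) × M × N`: `(S,m₁,n₁)·(T,m₂,n₂) = (m₁·T ∪ S·n₂, m₁·m₂, n₁·n₂)`. -/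
def dMul2 {M N : Type*} [Monoid M] [Monoid N] [DecidableEq M] [DecidableEq N]
    (p q : Finset (M × N) × M × N) : Finset (M × N) × M × N :=
  (q.1.image (fun t => (p.2.1 * t.1, t.2)) ∪ p.1.image (fun s => (s.1, s.2 * q.2.2)),
   p.2.1 * q.2.1, p.2.2 * q.2.2)

/-- For any monoid homomorphism `Φ = (ζ, φ₁, φ₂) : Σ* → ◊(M,N)` and any word `w`,
`ζ(w) = ⋃ {φ₁(u)·ζ(a)·φ₂(v) : w = u·a·v}`. -/
theorem stmt9 {A M N : Type*} [Monoid M] [Monoid N] [DecidableEq M] [DecidableEq N]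
    (Φ : List A → Finset (M × N) × M × N)
    (hone : Φ [] = (∅, 1, 1))
    (hmul : ∀ v w : List A, Φ (v ++ w) = dMul2 (Φ v) (Φ w)) :
    ∀ w : List A,
      ((Φ w).1 : Set (M × N)) =
        ⋃ (u : List A) (a : A) (v : List A) (_ : w = u ++ [a] ++ v),
          (fun t : M × N => ((Φ u).2.1 * t.1, t.2 * (Φ v).2.2)) '' ((Φ [a]).1 : Set (M × N)) := by
  intro w
  induction w with
  | nil =>
    ext x
    simp only [hone, Finset.coe_empty, Set.mem_empty_iff_false, Set.mem_iUnion, Set.mem_image,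
      false_iff, not_exists]
    intro u a v h
    exact absurd h (by simp)
  | cons a w ih =>
    have key : Φ (a :: w) = dMul2 (Φ [a]) (Φ w) := hmul [a] w
    ext x
    simp only [key, dMul2, Finset.coe_union, Finset.coe_image, Set.mem_union, Set.mem_image,
      Set.mem_iUnion, Finset.mem_coe]
    constructor
    · rintro (⟨t, ht, rfl⟩ | ⟨s, hs, rfl⟩)
      · have h2 : t ∈ ⋃ (u : List A) (b : A) (v : List A) (_ : w = u ++ [b] ++ v),
            (fun t : M × N => ((Φ u).2.1 * t.1, t.2 * (Φ v).2.2)) '' ((Φ [b]).1 : Set (M × N)) := by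
          rw [← ih]; exact ht
        simp only [Set.mem_iUnion, Set.mem_image, Finset.mem_coe] at h2
        obtain ⟨u, b, v, hw, s, hs, rfl⟩ := h2
        refine ⟨a :: u, b, v, by simp [hw], s, hs, ?_⟩
        have : Φ (a :: u) = dMul2 (Φ [a]) (Φ u) := hmul [a] u
        simp [this, dMul2, mul_assoc]
      · exact ⟨[], a, w, rfl, s, hs, by simp [hone]⟩
    · rintro ⟨u, b, v, hw, s, hs, rfl⟩
      cases u with
      | nil =>
        simp only [List.nil_append, List.cons_append] at hw
        obtain ⟨rfl, rfl⟩ := List.cons.injEq .. ▸ hw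
        exact Or.inr ⟨s, hs, by simp [hone]⟩
      | cons c u =>
        simp only [List.cons_append, List.cons.injEq] at hw
        obtain ⟨rfl, hw⟩ := hw
        refine Or.inl ⟨((Φ u).2.1 * s.1, s.2 * (Φ v).2.2), ?_, ?_⟩
        · rw [← Finset.mem_coe, ih]
          simp only [Set.mem_iUnion, Set.mem_image, Finset.mem_coe]
          exact ⟨u, b, v, hw, s, hs, rfl⟩
        · have : Φ (a :: u) = dMul2 (Φ [a]) (Φ u) := hmul [a] u
          simp [this, dMul2, mul_assoc]
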